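/- arXiv:1103.5161 — 4 statements merged into one kernel-verified Lean document; each statement's English description precedes it below -/
import Mathlib

section
/- Let U:[0,∞)→[0,∞) be nondecreasing, locally absolutely continuous, with U(r) ≤ ω_d r^d for all r, and suppose c U(r)^{(d-1)/d} ≤ 2 U'(r) + M·U(r) for a.e. r > 0, where c, M > 0 and d ≥ 2. Then for every r ≤ ω_d^{-1/d}·(c/(2M)), one has c·U(r)^{(d-1)/d} − M·U(r) ≥ (c/2)·U(r)^{(d-1)/d}, and consequently U(r) ≥ (c/(4d))^d r^d for all r ≤ ω_d^{-1/d}·(c/(2M)), provided U(r) > 0 for all r > 0. -/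
open MeasureTheory Set

set_option maxHeartbeats 1000000

/-- Gronwall-type ODE step in the density estimates for minimizers of the
prescribed curvature functional. -/
theorem stmt_0 (d : ℕ) (hd : 2 ≤ d) (ω c M : ℝ) (hω : 0 < ω) (hc : 0 < c) (hM : 0 < M)
    (U U' : ℝ → ℝ)
    (hmono : MonotoneOn U (Set.Ici 0))
    (hnonneg : ∀ r, 0 ≤ r → 0 ≤ U r)
    (hbound : ∀ r, 0 ≤ r → U r ≤ ω * r ^ d)
    (hftc : ∀ a b : ℝ, 0 ≤ a → a ≤ b → U b - U a = ∫ t in a..b, U' t)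
    (hode : ∀ᵐ r : ℝ ∂volume, 0 < r → c * U r ^ ((d - 1 : ℝ) / d) ≤ 2 * U' r + M * U r) :
    (∀ r : ℝ, 0 < r → r ≤ ω ^ (-(1 : ℝ) / d) * (c / (2 * M)) →
      c / 2 * U r ^ ((d - 1 : ℝ) / d) ≤ c * U r ^ ((d - 1 : ℝ) / d) - M * U r) ∧
    ((∀ r : ℝ, 0 < r → 0 < U r) →
      ∀ r : ℝ, 0 < r → r ≤ ω ^ (-(1 : ℝ) / d) * (c / (2 * M)) →
        (c / (4 * d)) ^ d * r ^ d ≤ U r) := by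
  have hd2 : (2 : ℝ) ≤ (d : ℝ) := by exact_mod_cast hd
  have hdpos : (0 : ℝ) < (d : ℝ) := by linarith
  have hdne : (d : ℝ) ≠ 0 := ne_of_gt hdpos
  have hdnn : d ≠ 0 := by positivity
  set p : ℝ := ((d : ℝ) - 1) / d with hp
  have hppos : 0 < p := by
    rw [hp]; apply div_pos (by linarith) hdpos
  -- Part 1 (as a `have`, applied pointwise)
  have part1 : ∀ r : ℝ, 0 < r → r ≤ ω ^ (-(1 : ℝ) / d) * (c / (2 * M)) →
      M * U r ≤ c / 2 * U r ^ p := by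
    intro r hr hrR
    have hUr0 : 0 ≤ U r := hnonneg r hr.le
    rcases eq_or_lt_of_le hUr0 with h0 | hUrpos
    · rw [← h0, Real.zero_rpow (ne_of_gt hppos)]
      simp
    -- U r ≤ (c/(2M))^d
    have hcM : (0 : ℝ) < c / (2 * M) := by positivity
    have hωd : (ω ^ (-(1 : ℝ) / d)) ^ d = ω⁻¹ := by
      rw [← Real.rpow_natCast (ω ^ (-(1 : ℝ) / d)) d, ← Real.rpow_mul hω.le]
      rw [show (-(1 : ℝ) / d) * d = -1 by field_simp]
      exact Real.rpow_neg_one ω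
    have h1 : U r ≤ (c / (2 * M)) ^ d := by
      have h2 : U r ≤ ω * r ^ d := hbound r hr.le
      have h3 : r ^ d ≤ (ω ^ (-(1 : ℝ) / d) * (c / (2 * M))) ^ d :=
        pow_le_pow_left₀ hr.le hrR d
      calc U r ≤ ω * (ω ^ (-(1 : ℝ) / d) * (c / (2 * M))) ^ d := by nlinarith
        _ = ω * ((ω ^ (-(1 : ℝ) / d)) ^ d * (c / (2 * M)) ^ d) := by rw [mul_pow]
        _ = (c / (2 * M)) ^ d := by
            rw [hωd]; field_simp
    have h4 : U r ^ ((1 : ℝ) / d) ≤ c / (2 * M) := by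
      have := Real.rpow_le_rpow hUr0 h1 (by positivity : (0:ℝ) ≤ (1:ℝ)/d)
      calc U r ^ ((1 : ℝ) / d) ≤ ((c / (2 * M)) ^ d) ^ ((1 : ℝ) / d) := this
        _ = c / (2 * M) := by
            rw [← Real.rpow_natCast (c / (2 * M)) d, ← Real.rpow_mul hcM.le]
            rw [show ((d : ℝ)) * ((1:ℝ)/d) = 1 by field_simp]
            exact Real.rpow_one _
    have hsplit : U r = U r ^ ((1 : ℝ) / d) * U r ^ p := by
      rw [← Real.rpow_add hUrpos, hp]
      rw [show (1 : ℝ) / d + ((d : ℝ) - 1) / d = 1 by field_simp; ring]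
      exact (Real.rpow_one _).symm
    have hpnn : 0 ≤ U r ^ p := Real.rpow_nonneg hUr0 p
    calc M * U r = (M * U r ^ ((1 : ℝ) / d)) * U r ^ p := by nth_rewrite 1 [hsplit]; ring
      _ ≤ (M * (c / (2 * M))) * U r ^ p := by
          apply mul_le_mul_of_nonneg_right _ hpnn
          exact mul_le_mul_of_nonneg_left h4 hM.le
      _ = c / 2 * U r ^ p := by
          have hMc : M * (c / (2 * M)) = c / 2 := by field_simp
          rw [hMc]
  constructor
  · intro r hr hrR
    have h := part1 r hr hrR
    have hid : c * U r ^ p = c / 2 * U r ^ p + c / 2 * U r ^ p := by ring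
    linarith
  · intro hpos r0 hr0 hr0R
    -- Step A: interval integrability of U' everywhere on [0,∞)
    have hU0 : U 0 = 0 := by
      have h1 := hbound 0 le_rfl
      have h2 := hnonneg 0 le_rfl
      have : (0:ℝ) ^ d = 0 := zero_pow hdnn
      nlinarith
    have hInt : ∀ a b : ℝ, 0 ≤ a → a ≤ b → IntervalIntegrable U' volume a b := by
      intro a b ha hab
      by_contra h
      have hab' : a < b := by
        rcases eq_or_lt_of_le hab with rfl | h'
        · exact (h IntervalIntegrable.refl).elim
        · exact h'
      have hnot : ¬ IntervalIntegrable U' volume 0 b := by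
        intro hcon
        apply h
        rw [intervalIntegrable_iff_integrableOn_Ioc_of_le hab]
        rw [intervalIntegrable_iff_integrableOn_Ioc_of_le (ha.trans hab)] at hcon
        exact hcon.mono_set (Ioc_subset_Ioc_left ha)
      have hz : (∫ t in (0:ℝ)..b, U' t) = 0 := intervalIntegral.integral_undef hnot
      have := hftc 0 b le_rfl (ha.trans hab)
      rw [hz, hU0] at this
      have hbpos : 0 < b := lt_of_le_of_lt ha hab'
      have := hpos b hbpos
      linarith
    -- a.e. lower bound on U' on (0, r0]
    set k : ℝ := c / (4 * d) with hk
    have hkpos : 0 < k := by rw [hk]; positivity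
    -- main comparison claim
    have key : ∀ a : ℝ, 0 < a → a < r0 → (k * (r0 - a)) ^ d ≤ U r0 := by
      intro a ha har
      set A : ℝ := U a with hA
      have hApos : 0 < A := hpos a ha
      set α : ℝ := A ^ ((1 : ℝ) / d) with hα
      have hαpos : 0 < α := Real.rpow_pos_of_pos hApos _
      have hαd : α ^ d = A := by
        rw [hα, ← Real.rpow_natCast (A ^ ((1:ℝ)/d)) d, ← Real.rpow_mul hApos.le]
        rw [show (1 : ℝ) / d * d = 1 by field_simp]
        exact Real.rpow_one _
      set φ : ℝ → ℝ := fun t => ((1:ℝ)/2 * α + k * (t - a)) ^ d with hφ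
      have hφa : φ a < A := by
        have : φ a = ((1:ℝ)/2) ^ d * A := by
          simp only [hφ, sub_self, mul_zero, add_zero, mul_pow, hαd]
        rw [this]
        have h12 : ((1:ℝ)/2) ^ d < 1 := by
          apply pow_lt_one₀ (by norm_num) (by norm_num) hdnn
        nlinarith
      have hbase : ∀ t : ℝ, a ≤ t → 0 ≤ (1:ℝ)/2 * α + k * (t - a) := by
        intro t ht
        have h1 : 0 ≤ k * (t - a) := mul_nonneg hkpos.le (by linarith)
        nlinarith
      -- U ≥ φ on [a, r0]
      have hge : ∀ t ∈ Icc a r0, φ t ≤ U t := by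
        by_contra hcon
        push_neg at hcon
        set S : Set ℝ := {t | t ∈ Icc a r0 ∧ U t < φ t} with hS
        have hSne : S.Nonempty := by
          obtain ⟨t, ht, ht2⟩ := hcon
          exact ⟨t, ht, ht2⟩
        have hSbdd : BddBelow S := ⟨a, fun x hx => hx.1.1⟩
        set T : ℝ := sInf S with hT
        have hTa : a ≤ T := le_csInf hSne (fun s hs => hs.1.1)
        have hTr : T ≤ r0 := by
          obtain ⟨s, hs⟩ := hSne
          exact (csInf_le hSbdd hs).trans hs.1.2
        have hT1 : ∀ t, a ≤ t → t < T → φ t ≤ U t := by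
          intro t hta htT
          by_contra hlt
          push_neg at hlt
          have : t ∈ S := ⟨⟨hta, htT.le.trans hTr⟩, hlt⟩
          exact absurd (csInf_le hSbdd this) (not_le.mpr htT)
        -- U T ≤ φ T
        have hT2 : U T ≤ φ T := by
          have step : ∀ ε : ℝ, 0 < ε → U T ≤ ((1:ℝ)/2 * α + k * (T + ε - a)) ^ d := by
            intro ε hε
            obtain ⟨s, hsS, hsε⟩ := exists_lt_of_csInf_lt hSne
              (lt_add_of_pos_right T hε)
            have hTs : T ≤ s := csInf_le hSbdd hsS
            have hUTs : U T ≤ U s := by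
              apply hmono _ _ hTs
              · exact mem_Ici.mpr (le_trans ha.le hTa)
              · exact mem_Ici.mpr (le_trans (le_trans ha.le hTa) hTs)
            have hsφ : U s < φ s := hsS.2
            have hsa : a ≤ s := hsS.1.1
            have hmon : φ s ≤ ((1:ℝ)/2 * α + k * (T + ε - a)) ^ d := by
              apply pow_le_pow_left₀ (hbase s hsa)
              nlinarith
            linarith
          have htend : Filter.Tendsto (fun ε : ℝ => ((1:ℝ)/2 * α + k * (T + ε - a)) ^ d)
              (nhdsWithin 0 (Ioi 0)) (nhds (φ T)) := by
            have hcont : Continuous (fun ε : ℝ => ((1:ℝ)/2 * α + k * (T + ε - a)) ^ d) := by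
              fun_prop
            have := hcont.tendsto 0
            rw [show ((1:ℝ)/2 * α + k * (T + 0 - a)) ^ d = φ T by simp only [hφ]; norm_num] at this
            exact this.mono_left nhdsWithin_le_nhds
          refine ge_of_tendsto htend ?_
          filter_upwards [self_mem_nhdsWithin] with ε hε
          exact step ε hε
        -- integral lower bound
        have hintU' : IntervalIntegrable U' volume a T := hInt a T ha.le hTa
        set g : ℝ → ℝ := fun t => c / 4 * ((1:ℝ)/2 * α + k * (t - a)) ^ (d - 1) with hg
        have hgcont : Continuous g := by rw [hg]; fun_prop
        have hintg : IntervalIntegrable g volume a T := hgcont.intervalIntegrable a T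
        have hTne : ∀ᵐ t : ℝ ∂volume, t ≠ T := by
          rw [ae_iff]
          have : {t : ℝ | ¬ t ≠ T} = {T} := by ext t; simp
          rw [this]
          exact Real.volume_singleton
        have hae : g ≤ᵐ[volume.restrict (Icc a T)] U' := by
          filter_upwards [ae_restrict_mem measurableSet_Icc, ae_restrict_of_ae hode,
            ae_restrict_of_ae hTne] with t htmem htode htne
          have htT : t < T := lt_of_le_of_ne htmem.2 htne
          have hta : a ≤ t := htmem.1
          have htpos : 0 < t := lt_of_lt_of_le ha hta
          have htr0 : t ≤ r0 := le_trans htT.le hTr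
          have h1 := part1 t htpos (le_trans htr0 hr0R)
          have h2 := htode htpos
          have hU't : c / 4 * U t ^ p ≤ U' t := by
            change c * U t ^ p ≤ 2 * U' t + M * U t at h2
            linarith
          have hφt : φ t ≤ U t := hT1 t hta htT
          have hφp : ((1:ℝ)/2 * α + k * (t - a)) ^ (d - 1) ≤ U t ^ p := by
            have hb := hbase t hta
            have hpow : (φ t) ^ p = ((1:ℝ)/2 * α + k * (t - a)) ^ (d - 1) := by
              simp only [hφ]
              rw [← Real.rpow_natCast ((1:ℝ)/2 * α + k * (t - a)) d,
                ← Real.rpow_mul hb, hp]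
              rw [show (d : ℝ) * (((d:ℝ) - 1) / d) = (d : ℝ) - 1 by field_simp]
              rw [show ((d:ℝ) - 1) = ((d - 1 : ℕ) : ℝ) by
                rw [Nat.cast_sub (show 1 ≤ d by omega)]; norm_num]
              exact Real.rpow_natCast _ _
            rw [← hpow]
            apply Real.rpow_le_rpow (by positivity) hφt hppos.le
          calc g t = c / 4 * ((1:ℝ)/2 * α + k * (t - a)) ^ (d - 1) := rfl
            _ ≤ c / 4 * U t ^ p := by nlinarith
            _ ≤ U' t := hU't
        have hintle : (∫ t in a..T, g t) ≤ ∫ t in a..T, U' t :=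
          intervalIntegral.integral_mono_ae_restrict hTa hintg hintU' hae
        -- compute ∫ g = φ T - φ a
        have hcomp : (∫ t in a..T, g t) = φ T - φ a := by
          have e1 : (∫ t in a..T, g t)
              = c / 4 * ∫ t in a..T, ((1:ℝ)/2 * α + k * (t - a)) ^ (d - 1) := by
            rw [hg, intervalIntegral.integral_const_mul]
          have e2 : ∀ t : ℝ, ((1:ℝ)/2 * α + k * (t - a)) ^ (d - 1)
              = (fun u : ℝ => u ^ (d - 1)) (k * t + ((1:ℝ)/2 * α - k * a)) := by
            intro t; ring_nf
          have e3 : (∫ t in a..T, ((1:ℝ)/2 * α + k * (t - a)) ^ (d - 1))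
              = k⁻¹ • ∫ u in (k * a + ((1:ℝ)/2 * α - k * a))..(k * T + ((1:ℝ)/2 * α - k * a)),
                  u ^ (d - 1) := by
            rw [← intervalIntegral.integral_comp_mul_add (fun u : ℝ => u ^ (d - 1))
              hkpos.ne' ((1:ℝ)/2 * α - k * a)]
            exact intervalIntegral.integral_congr (fun t _ => e2 t)
          have e4 : (∫ u in (k * a + ((1:ℝ)/2 * α - k * a))..(k * T + ((1:ℝ)/2 * α - k * a)),
              u ^ (d - 1))
              = ((k * T + ((1:ℝ)/2 * α - k * a)) ^ (d - 1 + 1)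
                - (k * a + ((1:ℝ)/2 * α - k * a)) ^ (d - 1 + 1)) / (((d - 1 : ℕ) : ℝ) + 1) := by
            exact integral_pow (d - 1)
          have hd1 : d - 1 + 1 = d := by omega
          have hdc : ((d - 1 : ℕ) : ℝ) + 1 = (d : ℝ) := by exact_mod_cast hd1
          rw [e1, e3, e4, hd1, hdc]
          simp only [hφ]
          have h1 : k * T + ((1:ℝ)/2 * α - k * a) = (1:ℝ)/2 * α + k * (T - a) := by ring
          have h2 : k * a + ((1:ℝ)/2 * α - k * a) = (1:ℝ)/2 * α + k * (a - a) := by ring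
          rw [h1, h2]
          rw [smul_eq_mul]
          rw [hk]
          field_simp
        have hfc := hftc a T ha.le hTa
        -- contradiction
        have : φ T - φ a ≤ U T - U a := by rw [hfc]; linarith
        linarith
      -- conclude
      have := hge r0 ⟨har.le, le_rfl⟩
      have hfin : (k * (r0 - a)) ^ d ≤ φ r0 := by
        have h1 : 0 ≤ k * (r0 - a) := mul_nonneg hkpos.le (by linarith)
        have h2 : k * (r0 - a) ≤ (1:ℝ)/2 * α + k * (r0 - a) := by linarith
        simpa only [hφ] using pow_le_pow_left₀ h1 h2 d
      linarith
    -- limit a → 0⁺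
    have htend : Filter.Tendsto (fun a : ℝ => (k * (r0 - a)) ^ d)
        (nhdsWithin 0 (Ioi 0)) (nhds ((k * r0) ^ d)) := by
      have hcont : Continuous (fun a : ℝ => (k * (r0 - a)) ^ d) := by fun_prop
      have := hcont.tendsto 0
      rw [show (k * (r0 - 0)) ^ d = (k * r0) ^ d by norm_num] at this
      exact this.mono_left nhdsWithin_le_nhds
    have hle : (k * r0) ^ d ≤ U r0 := by
      refine le_of_tendsto htend ?_
      filter_upwards [Ioo_mem_nhdsGT_of_mem (⟨le_rfl, hr0⟩ : (0:ℝ) ∈ Ico 0 r0)]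
        with a ha
      exact key a ha.1 ha.2
    calc (c / (4 * (d:ℝ))) ^ d * r0 ^ d = (k * r0) ^ d := by rw [hk, mul_pow]
      _ ≤ U r0 := hle
end

section
/- The Alexandrov–Fenchel-type inequality ((d−1)/d)·P(E)^2 ≥ |E|·∫_{∂E} κ dH^{d−1} fails for general smooth compact sets in ℝ^2: for a disjoint union of N balls in ℝ^2 with radii r_i = 1/i², as N → ∞ the left-hand side remains bounded while the right-hand side tends to +∞. -/
open Filter

lemma sum_sq_le (N : ℕ) : ∑ i ∈ Finset.range N, (1 : ℝ) / ((i : ℝ) + 1) ^ 2 ≤ 2 := by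
  have h : ∀ N : ℕ, ∑ i ∈ Finset.range N, (1 : ℝ) / ((i : ℝ) + 1) ^ 2 ≤ 2 - 1 / (N:ℝ) := by
    intro N
    induction N with
    | zero => norm_num
    | succ n ih =>
      rw [Finset.sum_range_succ]
      rcases Nat.eq_zero_or_pos n with hn | hn
      · subst hn; norm_num
      · have h1 : (0:ℝ) < (n:ℝ) := by exact_mod_cast hn
        have key : (1:ℝ) / ((n:ℝ) + 1) ^ 2 ≤ 1 / (n:ℝ) - 1 / ((n:ℝ)+1) := by
          rw [div_sub_div _ _ (ne_of_gt h1) (by positivity),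
            div_le_div_iff₀ (by positivity) (by positivity)]
          nlinarith
        push_cast
        linarith
  rcases Nat.eq_zero_or_pos N with hN | hN
  · subst hN; norm_num
  · have h1 : (0:ℝ) < (N:ℝ) := by exact_mod_cast hN
    have := h N
    have h2 : (0:ℝ) < 1 / (N:ℝ) := by positivity
    linarith

lemma sum_pow4_ge_one {N : ℕ} (hN : 1 ≤ N) :
    (1:ℝ) ≤ ∑ i ∈ Finset.range N, (1 : ℝ) / ((i : ℝ) + 1) ^ 4 := by
  calc (1:ℝ) = ∑ i ∈ Finset.range 1, (1 : ℝ) / ((i : ℝ) + 1) ^ 4 := by norm_num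
    _ ≤ _ := Finset.sum_le_sum_of_subset_of_nonneg
        (Finset.range_subset_range.2 hN) (fun i _ _ => by positivity)

/-- The Alexandrov–Fenchel inequality `((d-1)/d) P(E)² ≥ |E| ∫_{∂E} κ` fails for the
disjoint union of `N` balls in `ℝ²` of radii `rᵢ = 1/i²`: the left-hand side
`(1/2)(2π Σ rᵢ)²` stays bounded while the right-hand side `(π Σ rᵢ²)·2πN` blows up,
so the inequality fails for some `N`. -/
theorem stmt_5 :
    (∃ B : ℝ, ∀ N : ℕ,
      (1 / 2 : ℝ) * (2 * Real.pi * ∑ i ∈ Finset.range N, (1 : ℝ) / ((i : ℝ) + 1) ^ 2) ^ 2 ≤ B) ∧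
    Tendsto
      (fun N : ℕ =>
        (Real.pi * ∑ i ∈ Finset.range N, (1 : ℝ) / ((i : ℝ) + 1) ^ 4) * (2 * Real.pi * N))
      atTop atTop ∧
    ∃ N : ℕ,
      (1 / 2 : ℝ) * (2 * Real.pi * ∑ i ∈ Finset.range N, (1 : ℝ) / ((i : ℝ) + 1) ^ 2) ^ 2 <
        (Real.pi * ∑ i ∈ Finset.range N, (1 : ℝ) / ((i : ℝ) + 1) ^ 4) * (2 * Real.pi * N) := by
  have hpi := Real.pi_pos
  refine ⟨⟨8 * Real.pi ^ 2, fun N => ?_⟩, ?_, ⟨5, ?_⟩⟩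
  · have hS := sum_sq_le N
    have hS0 : (0:ℝ) ≤ ∑ i ∈ Finset.range N, (1 : ℝ) / ((i : ℝ) + 1) ^ 2 :=
      Finset.sum_nonneg fun i _ => by positivity
    set S := ∑ i ∈ Finset.range N, (1 : ℝ) / ((i : ℝ) + 1) ^ 2 with hSdef
    have hS2 : S * S ≤ 4 := by nlinarith
    nlinarith [sq_nonneg Real.pi, mul_nonneg (sq_nonneg Real.pi) (sub_nonneg.2 hS2)]
  · apply tendsto_atTop_mono' _ (_ : ∀ᶠ N : ℕ in atTop, 2 * Real.pi ^ 2 * N ≤ _)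
    · exact (tendsto_natCast_atTop_atTop.const_mul_atTop (by positivity))
    · filter_upwards [eventually_ge_atTop 1] with N hN
      have h4 := sum_pow4_ge_one hN
      have hN' : (0:ℝ) ≤ (N:ℝ) := Nat.cast_nonneg N
      set S := ∑ i ∈ Finset.range N, (1 : ℝ) / ((i : ℝ) + 1) ^ 4
      nlinarith [mul_nonneg (mul_nonneg (sq_nonneg Real.pi) hN') (sub_nonneg.2 h4)]
  · have hS := sum_sq_le 5
    have h4 := sum_pow4_ge_one (by norm_num : 1 ≤ 5)
    have hS0 : (0:ℝ) ≤ ∑ i ∈ Finset.range 5, (1 : ℝ) / ((i : ℝ) + 1) ^ 2 :=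
      Finset.sum_nonneg fun i _ => by positivity
    set S := ∑ i ∈ Finset.range 5, (1 : ℝ) / ((i : ℝ) + 1) ^ 2
    set T := ∑ i ∈ Finset.range 5, (1 : ℝ) / ((i : ℝ) + 1) ^ 4
    have hS2 : S * S ≤ 4 := by nlinarith
    have hpi2 : (0:ℝ) < Real.pi ^ 2 := by positivity
    push_cast
    nlinarith [mul_nonneg (le_of_lt hpi2) (sub_nonneg.2 hS2),
      mul_le_mul_of_nonneg_left h4 (le_of_lt hpi2)]
end

section
/- Let f:(0,∞)→ℝ be defined by f(v) = min{ P(E) − ∫_E g dx : |E| = v } (assuming the minimum is attained for every v). Then f is sub-additive: f(v + v') ≤ f(v) + f(v') for all v, v' > 0. -/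
open MeasureTheory Set

/-- Sub-additivity of the isovolumetric function `f(v) = min_{|E|=v} F(E)`,
where `F` is invariant by integer translations (periodicity of `g`) and is additive on
sets lying at positive distance from each other. -/
theorem stmt_6 (d : ℕ) (hd : 1 ≤ d)
    (F : Set (EuclideanSpace ℝ (Fin d)) → ℝ) (f : ℝ → ℝ)
    (hmin : ∀ v : ℝ, 0 < v → ∃ E : Set (EuclideanSpace ℝ (Fin d)),
      MeasurableSet E ∧ Bornology.IsBounded E ∧ (volume E).toReal = v ∧ F E = f v)
    (hlb : ∀ v : ℝ, 0 < v → ∀ E : Set (EuclideanSpace ℝ (Fin d)),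
      MeasurableSet E → (volume E).toReal = v → f v ≤ F E)
    (htrans : ∀ (E : Set (EuclideanSpace ℝ (Fin d))) (z : Fin d → ℤ),
      F ((fun x => x + (WithLp.equiv 2 (Fin d → ℝ)).symm (fun i => (z i : ℝ))) '' E) = F E)
    (hadd : ∀ E E' : Set (EuclideanSpace ℝ (Fin d)),
      Disjoint (closure E) (closure E') → F (E ∪ E') = F E + F E') :
    ∀ v v' : ℝ, 0 < v → 0 < v' → f (v + v') ≤ f v + f v' := by
  intro v v' hv hv'
  obtain ⟨E, hEm, hEb, hEv, hEF⟩ := hmin v hv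
  obtain ⟨E', hE'm, hE'b, hE'v, hE'F⟩ := hmin v' hv'
  obtain ⟨R, hR⟩ := (hEb.closure.union hE'b.closure).subset_ball 0
  obtain ⟨N, hN⟩ := exists_nat_gt (2 * R)
  set z : Fin d → ℤ := fun _ => (N : ℤ) with hz
  set c : EuclideanSpace ℝ (Fin d) :=
    (WithLp.equiv 2 (Fin d → ℝ)).symm (fun i => (z i : ℝ)) with hcdef
  set E2 : Set (EuclideanSpace ℝ (Fin d)) := (fun x => x + c) '' E' with hE2def
  -- lower bound on the norm of the translation vector
  have hc : (N : ℝ) ≤ ‖c‖ := by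
    have : ((N : ℝ) ^ 2) ≤ ∑ i : Fin d, ‖c i‖ ^ 2 := by
      have hsum : ∑ i : Fin d, ‖c i‖ ^ 2 = (d : ℝ) * (N : ℝ) ^ 2 := by
        have : ∀ i : Fin d, ‖c i‖ ^ 2 = (N : ℝ) ^ 2 := by
          intro i
          simp [hcdef, hz, sq_abs]
        rw [Finset.sum_congr rfl (fun i _ => this i), Finset.sum_const]
        simp [mul_comm]
      rw [hsum]
      nlinarith [sq_nonneg (N : ℝ), (by exact_mod_cast hd : (1 : ℝ) ≤ d)]
    calc (N : ℝ) = Real.sqrt ((N : ℝ) ^ 2) := by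
          rw [Real.sqrt_sq (Nat.cast_nonneg N)]
      _ ≤ Real.sqrt (∑ i : Fin d, ‖c i‖ ^ 2) := Real.sqrt_le_sqrt this
      _ = ‖c‖ := (EuclideanSpace.norm_eq c).symm
  -- disjointness of closures
  have hclE2 : closure E2 = (fun x => x + c) '' closure E' := by
    exact ((Homeomorph.addRight c).image_closure E').symm
  have hdisj : Disjoint (closure E) (closure E2) := by
    rw [Set.disjoint_left]
    intro x hx hx2
    rw [hclE2] at hx2
    obtain ⟨y, hy, rfl⟩ := hx2
    have h1 : ‖y + c‖ < R := by
      have := hR (Or.inl hx)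
      simpa [mem_ball_zero_iff] using this
    have h2 : ‖y‖ < R := by
      have := hR (Or.inr hy)
      simpa [mem_ball_zero_iff] using this
    have : ‖c‖ ≤ ‖y + c‖ + ‖y‖ := by
      have := norm_sub_le (y + c) y
      simpa using this
    linarith
  -- measurability and volume of the translated set
  have hE2m : MeasurableSet E2 := by
    rw [hE2def, Set.image_add_right]
    exact hE'm.preimage (measurable_add_const _)
  have hE2vol : volume E2 = volume E' := by
    rw [hE2def, Set.image_add_right, measure_preimage_add_right]
  have hEfin : volume E < ⊤ := hEb.measure_lt_top
  have hE2fin : volume E2 < ⊤ := by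
    rw [hE2vol]; exact hE'b.measure_lt_top
  have hdisj' : Disjoint E E2 :=
    Set.disjoint_of_subset subset_closure subset_closure hdisj
  have hvol : (volume (E ∪ E2)).toReal = v + v' := by
    rw [measure_union hdisj' hE2m, ENNReal.toReal_add hEfin.ne hE2fin.ne, hE2vol, hEv, hE'v]
  calc f (v + v') ≤ F (E ∪ E2) :=
        hlb _ (by linarith) _ (hEm.union hE2m) hvol
    _ = F E + F E2 := hadd _ _ hdisj
    _ = f v + f v' := by rw [hE2def, hcdef, htrans E' z, hEF, hE'F]
end

section
/- Suppose E_n, E ⊂ ℝ^d are sets with |E_n Δ E| → 0, and suppose there exist γ > 0 and r₀ > 0 such that for every n and every x: if x ∈ E_n then |E_n ∩ B_r(x)| ≥ γ r^d for all r ≤ r₀, and if x ∉ E_n then |B_r(x) \ E_n| ≥ γ r^d for all r ≤ r₀; assume E satisfies the same density estimates. Then ∂E_n → ∂E in the Hausdorff distance: for every ε ∈ (0, r₀], for all n sufficiently large, ∂E_n ⊂ {y : dist(y, ∂E) ≤ ε} and ∂E ⊂ {y : dist(y, ∂E_n) ≤ ε}. -/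
open MeasureTheory Metric Set Filter

lemma density_le_symmDiff {d : ℕ} (γ ε : ℝ) (hγ : 0 < γ) (hε : 0 < ε)
    (A B : Set (EuclideanSpace ℝ (Fin d)))
    (hin : ∀ x ∈ A, ENNReal.ofReal (γ * (ε / 2) ^ d) ≤ volume (A ∩ ball x (ε / 2)))
    (hout : ∀ x, x ∉ A → ENNReal.ofReal (γ * (ε / 2) ^ d) ≤ volume (ball x (ε / 2) \ A))
    (y : EuclideanSpace ℝ (Fin d)) (hy : y ∈ frontier A)
    (hb : ball y ε ⊆ B ∨ ball y ε ⊆ Bᶜ) :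
    ENNReal.ofReal (γ * (ε / 2) ^ d) ≤ volume (symmDiff A B) := by
  have hε2 : 0 < ε / 2 := by linarith
  rw [frontier_eq_closure_inter_closure] at hy
  rcases hb with hb | hb
  · -- ball ⊆ B : use a point outside A
    obtain ⟨x, hxA, hxy⟩ := Metric.mem_closure_iff.1 hy.2 (ε / 2) hε2
    refine le_trans (hout x hxA) (measure_mono ?_)
    have hball : ball x (ε / 2) ⊆ ball y ε := by
      apply ball_subset_ball'
      rw [dist_comm] at hxy
      linarith
    intro z hz
    rw [Set.mem_symmDiff]
    exact Or.inr ⟨hb (hball hz.1), hz.2⟩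
  · -- ball ⊆ Bᶜ : use a point in A
    obtain ⟨x, hxA, hxy⟩ := Metric.mem_closure_iff.1 hy.1 (ε / 2) hε2
    refine le_trans (hin x hxA) (measure_mono ?_)
    have hball : ball x (ε / 2) ⊆ ball y ε := by
      apply ball_subset_ball'
      rw [dist_comm] at hxy
      linarith
    intro z hz
    rw [Set.mem_symmDiff]
    exact Or.inl ⟨hz.1, hb (hball hz.2)⟩

lemma ball_subset_of_infDist_frontier {d : ℕ} (G : Set (EuclideanSpace ℝ (Fin d)))
    (y : EuclideanSpace ℝ (Fin d)) (ε : ℝ) (h : ε < Metric.infDist y (frontier G)) :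
    ball y ε ⊆ G ∨ ball y ε ⊆ Gᶜ := by
  have hsub : ball y ε ⊆ interior G ∪ interior Gᶜ := by
    intro z hz
    by_contra hz'
    rw [Set.mem_union, not_or] at hz'
    have hzf : z ∈ frontier G := by
      rw [frontier_eq_closure_inter_closure]
      constructor
      · by_contra hc
        exact hz'.2 (by rwa [interior_compl, Set.mem_compl_iff])
      · by_contra hc
        exact hz'.1 (by simpa [closure_compl, not_not] using hc)
    have := Metric.infDist_le_dist_of_mem (x := y) hzf
    rw [Metric.mem_ball, dist_comm] at hz
    linarith
  have hdisj : Disjoint (interior G) (interior Gᶜ) := by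
    rw [interior_compl]
    exact disjoint_compl_right.mono interior_subset_closure le_rfl
  rcases ((convex_ball y ε).isPreconnected).subset_or_subset isOpen_interior
      isOpen_interior hdisj hsub with h | h
  · exact Or.inl (h.trans interior_subset)
  · exact Or.inr (h.trans interior_subset)

/-- `L¹` convergence together with uniform interior and exterior density estimates
implies Hausdorff convergence of the boundaries. -/
theorem stmt_19 (d : ℕ) (hd : 1 ≤ d) (γ r₀ : ℝ) (hγ : 0 < γ) (hr₀ : 0 < r₀)
    (E : ℕ → Set (EuclideanSpace ℝ (Fin d))) (F : Set (EuclideanSpace ℝ (Fin d)))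
    (hEm : ∀ n, MeasurableSet (E n)) (hFm : MeasurableSet F)
    (hconv : Tendsto (fun n => volume (symmDiff (E n) F)) atTop (nhds 0))
    (hin : ∀ n, ∀ x ∈ E n, ∀ r : ℝ, 0 < r → r ≤ r₀ →
      ENNReal.ofReal (γ * r ^ d) ≤ volume (E n ∩ ball x r))
    (hout : ∀ n, ∀ x, x ∉ E n → ∀ r : ℝ, 0 < r → r ≤ r₀ →
      ENNReal.ofReal (γ * r ^ d) ≤ volume (ball x r \ E n))
    (hFin : ∀ x ∈ F, ∀ r : ℝ, 0 < r → r ≤ r₀ →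
      ENNReal.ofReal (γ * r ^ d) ≤ volume (F ∩ ball x r))
    (hFout : ∀ x, x ∉ F → ∀ r : ℝ, 0 < r → r ≤ r₀ →
      ENNReal.ofReal (γ * r ^ d) ≤ volume (ball x r \ F)) :
    ∀ ε : ℝ, 0 < ε → ε ≤ r₀ →
      ∀ᶠ n in atTop,
        (∀ y ∈ frontier (E n), Metric.infDist y (frontier F) ≤ ε) ∧
        (∀ y ∈ frontier F, Metric.infDist y (frontier (E n)) ≤ ε) := by
  intro ε hε hεr
  have hε2 : 0 < ε / 2 := by linarith
  have hε2r : ε / 2 ≤ r₀ := by linarith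
  have hδ : (0 : ENNReal) < ENNReal.ofReal (γ * (ε / 2) ^ d) := by
    apply ENNReal.ofReal_pos.2
    positivity
  filter_upwards [hconv.eventually_lt_const hδ] with n hn
  constructor
  · intro y hy
    by_contra h
    push_neg at h
    have hb := ball_subset_of_infDist_frontier F y ε h
    have := density_le_symmDiff γ ε hγ hε (E n) F
      (fun x hx => hin n x hx (ε / 2) hε2 hε2r)
      (fun x hx => hout n x hx (ε / 2) hε2 hε2r) y hy hb
    exact absurd (lt_of_le_of_lt this hn) (lt_irrefl _)
  · intro y hy
    by_contra h
    push_neg at h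
    have hb := ball_subset_of_infDist_frontier (E n) y ε h
    have := density_le_symmDiff γ ε hγ hε F (E n)
      (fun x hx => hFin x hx (ε / 2) hε2 hε2r)
      (fun x hx => hFout x hx (ε / 2) hε2 hε2r) y hy hb
    rw [symmDiff_comm] at this
    exact absurd (lt_of_le_of_lt this hn) (lt_irrefl _)
end
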